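/- arXiv:1209.5947 — 2 statements merged into one kernel-verified Lean document; each statement's English description precedes it below -/
import Mathlib

section
/- Let c0, c3 be real numbers and let c1, c2, c1', c2' be real numbers with c1 + c2 = c1' + c2'. For velocities (c0,c1,c2,c3) define the discrete flux F_{c1,c2}(a,b,c,d) = a(1−b)·[(1−d)(c0(1−c) + c1·c) + d(c2(1−c) + c3·c)]. Then for all real u, v: F_{c1,c2}(u,u,v,v) = F_{c1',c2'}(u,u,v,v). In other words, the macroscopic flux of the pedestrian model depends on the velocities c1 and c2 only through their sum. -/
/-- Discrete flux of right-moving pedestrians of the mesoscopic model with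
slowdown velocities `c0, c1, c2, c3`. -/
noncomputable def pedFlux (c0 c1 c2 c3 a b c d : ℝ) : ℝ :=
  a * (1 - b) * ((1 - d) * (c0 * (1 - c) + c1 * c) + d * (c2 * (1 - c) + c3 * c))

/-- The macroscopic flux of the pedestrian model (the diagonal value of the
discrete flux) depends on the velocities `c1` and `c2` only through their sum. -/
theorem pedFlux_diagonal_depends_only_on_sum (c0 c3 c1 c2 c1' c2' : ℝ)
    (hsum : c1 + c2 = c1' + c2') (u v : ℝ) :
    pedFlux c0 c1 c2 c3 u u v v = pedFlux c0 c1' c2' c3 u u v v := by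
  unfold pedFlux
  linear_combination u * (1 - u) * (v * (1 - v)) * hsum
end

section
/- Let c0, c1, c2, c3 be real numbers, f(u) = u(1−u), g(u) = (c3−c2−c1+c0)u² + (c2+c1−2c0)u + c0, and F(a,b,c,d) = a(1−b)·[(1−d)(c0(1−c) + c1·c) + d(c2(1−c) + c3·c)]. Let ρ⁺, ρ⁻ : ℝ → ℝ be differentiable at a point x. Then lim_{h→0, h≠0} (1/h)·[ F(ρ⁺(x), ρ⁺(x+h), ρ⁻(x), ρ⁻(x+h)) − F(ρ⁺(x−h), ρ⁺(x), ρ⁻(x−h), ρ⁻(x)) ] = f'(ρ⁺(x))·g(ρ⁻(x))·(ρ⁺)'(x) + f(ρ⁺(x))·g'(ρ⁻(x))·(ρ⁻)'(x), i.e., the scaled discrete flux difference of the mesoscopic model converges, as the cell size h tends to 0, to the spatial derivative of the macroscopic flux f(ρ⁺)g(ρ⁻). -/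
open Filter Topology

/-- `f(u) = u(1−u)`, the density factor of the macroscopic pedestrian flux. -/
noncomputable def pedF (u : ℝ) : ℝ := u * (1 - u)

/-- `g(u) = (c3−c2−c1+c0)u² + (c2+c1−2c0)u + c0`, the velocity factor of the
macroscopic pedestrian flux. -/
noncomputable def pedG (c0 c1 c2 c3 u : ℝ) : ℝ :=
  (c3 - c2 - c1 + c0) * u ^ 2 + (c2 + c1 - 2 * c0) * u + c0

/-- The scaled discrete flux difference of the mesoscopic model converges, as
the cell size `h` tends to `0`, to the spatial derivative of the macroscopic
flux `f(ρ⁺)g(ρ⁻)`, namely `f'(ρ⁺)g(ρ⁻)(ρ⁺)' + f(ρ⁺)g'(ρ⁻)(ρ⁻)'`. -/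
theorem flux_difference_tendsto_macroscopic_derivative
    (c0 c1 c2 c3 : ℝ) (ρp ρm : ℝ → ℝ) (x dp dm : ℝ)
    (hρp : HasDerivAt ρp dp x) (hρm : HasDerivAt ρm dm x) :
    Tendsto (fun h : ℝ =>
        (pedFlux c0 c1 c2 c3 (ρp x) (ρp (x + h)) (ρm x) (ρm (x + h))
         - pedFlux c0 c1 c2 c3 (ρp (x - h)) (ρp x) (ρm (x - h)) (ρm x)) / h)
      (𝓝[≠] (0 : ℝ))
      (𝓝 ((1 - 2 * ρp x) * pedG c0 c1 c2 c3 (ρm x) * dp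
          + pedF (ρp x) * (2 * (c3 - c2 - c1 + c0) * ρm x + (c2 + c1 - 2 * c0)) * dm)) := by
  have hp : HasDerivAt (fun h : ℝ => ρp (x + h)) dp 0 := by
    have := HasDerivAt.comp (0 : ℝ)
      (show HasDerivAt ρp dp (x + id (0:ℝ)) by simpa using hρp)
      ((hasDerivAt_id (0 : ℝ)).const_add x)
    simpa [Function.comp_def] using this
  have hm : HasDerivAt (fun h : ℝ => ρm (x + h)) dm 0 := by
    have := HasDerivAt.comp (0 : ℝ)
      (show HasDerivAt ρm dm (x + id (0:ℝ)) by simpa using hρm)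
      ((hasDerivAt_id (0 : ℝ)).const_add x)
    simpa [Function.comp_def] using this
  have hq : HasDerivAt (fun h : ℝ => ρp (x - h)) (-dp) 0 := by
    have := HasDerivAt.comp (0 : ℝ)
      (show HasDerivAt ρp dp (x - id (0:ℝ)) by simpa using hρp)
      ((hasDerivAt_id (0 : ℝ)).const_sub x)
    simpa [Function.comp_def] using this
  have hn : HasDerivAt (fun h : ℝ => ρm (x - h)) (-dm) 0 := by
    have := HasDerivAt.comp (0 : ℝ)
      (show HasDerivAt ρm dm (x - id (0:ℝ)) by simpa using hρm)
      ((hasDerivAt_id (0 : ℝ)).const_sub x)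
    simpa [Function.comp_def] using this
  have t1 := (((hp.const_sub 1).const_mul (ρp x)).mul
    (((hm.const_sub 1).mul_const (c0 * (1 - ρm x) + c1 * ρm x)).add
      (hm.mul_const (c2 * (1 - ρm x) + c3 * ρm x))))
  have t2 := ((hq.mul_const (1 - ρp x)).mul
    (((((hn.const_sub 1).const_mul c0).add (hn.const_mul c1)).const_mul (1 - ρm x)).add
      ((((hn.const_sub 1).const_mul c2).add (hn.const_mul c3)).const_mul (ρm x))))
  have key := t1.sub t2
  simp only [add_zero, sub_zero, Pi.add_apply] at key
  have heq : (1 - 2 * ρp x) * pedG c0 c1 c2 c3 (ρm x) * dp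
      + pedF (ρp x) * (2 * (c3 - c2 - c1 + c0) * ρm x + (c2 + c1 - 2 * c0)) * dm
      = ρp x * -dp * ((1 - ρm x) * (c0 * (1 - ρm x) + c1 * ρm x)
            + ρm x * (c2 * (1 - ρm x) + c3 * ρm x))
        + ρp x * (1 - ρp x) * (-dm * (c0 * (1 - ρm x) + c1 * ρm x)
            + dm * (c2 * (1 - ρm x) + c3 * ρm x))
        - (-dp * (1 - ρp x) * ((1 - ρm x) * (c0 * (1 - ρm x) + c1 * ρm x)
              + ρm x * (c2 * (1 - ρm x) + c3 * ρm x))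
          + ρp x * (1 - ρp x) * ((1 - ρm x) * (c0 * - -dm + c1 * -dm)
              + ρm x * (c2 * - -dm + c3 * -dm))) := by
    simp only [pedF, pedG]; ring
  rw [heq]
  have key' : HasDerivAt (fun h : ℝ =>
      pedFlux c0 c1 c2 c3 (ρp x) (ρp (x + h)) (ρm x) (ρm (x + h))
      - pedFlux c0 c1 c2 c3 (ρp (x - h)) (ρp x) (ρm (x - h)) (ρm x)) _ 0 := key
  have := hasDerivAt_iff_tendsto_slope.mp key'
  refine this.congr (fun h => ?_)
  simp [slope, pedFlux]
  ring
end
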